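/- In the n-pure-strategy toy model, if σ satisfies r(π_j, σ) = r_j < 0 for exactly one j and r(π_i, σ) = r_i > 0 for all i ≠ j, then the probability (under the uniform distribution on the standard (n−1)-simplex of opponent mixtures a) that the opponent exploits σ, i.e., P[Σᵢ aᵢrᵢ ≤ 0], equals Π_{i≠j} (−r_j)/(r_i − r_j). -/
import Mathlib


open MeasureTheory Finset

/-- Probability that the opponent exploits `σ` in the `(n+1)`-pure-strategy toy
model.  Payoffs satisfy `r j < 0` for exactly one `j` and `r i > 0` for `i ≠ j`.
The opponent mixture `a`, uniform on the standard `n`-dimensional simplex, is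
parametrized by the chart `b : Fin n → ℝ` (weights of the strategies other than
`j`, with `1 - Σ b` the weight of `π_j`), so the simplex becomes
`S = {b : 0 ≤ b, Σ b ≤ 1}` and `r(π, σ) = L b`.  Then
`P[Σᵢ aᵢ rᵢ ≤ 0] = vol{b ∈ S : L b ≤ 0}/vol S = Π_{i≠j} (−r j)/(r i − r j)`. -/
theorem toy_model_exploitation_probability
    (n : ℕ) (r : Fin (n + 1) → ℝ) (j : Fin (n + 1))
    (hj : r j < 0) (hi : ∀ i, i ≠ j → 0 < r i) :
    let L : (Fin n → ℝ) → ℝ :=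
      fun b => (1 - ∑ i, b i) * r j + ∑ i, b i * r (j.succAbove i)
    let S : Set (Fin n → ℝ) := {b | (∀ i, 0 ≤ b i) ∧ (∑ i, b i) ≤ 1}
    (volume {b ∈ S | L b ≤ 0}).toReal =
      (∏ i : Fin n, (-(r j)) / (r (j.succAbove i) - r j)) * (volume S).toReal := by
  intro L S
  set d : Fin n → ℝ := fun i => (-(r j)) / (r (j.succAbove i) - r j) with hd_def
  have hr' : ∀ i : Fin n, 0 < r (j.succAbove i) :=
    fun i => hi _ (j.succAbove_ne i)
  have hsub : ∀ i : Fin n, 0 < r (j.succAbove i) - r j := fun i => by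
    have := hr' i; linarith
  have hd : ∀ i, 0 < d i := fun i => div_pos (by linarith) (hsub i)
  have hd1 : ∀ i, d i ≤ 1 := fun i => by
    rw [div_le_one (hsub i)]; have := hr' i; linarith
  -- key equivalence
  have key : ∀ x : Fin n → ℝ, (L x ≤ 0 ↔ ∑ i, x i / d i ≤ 1) := by
    intro x
    have h1 : ∀ i, x i / d i = x i * (r (j.succAbove i) - r j) / (-(r j)) := by
      intro i
      show x i / (-r j / (r (j.succAbove i) - r j)) = _
      rw [div_div_eq_mul_div]
    have h2 : ∑ i, x i / d i
        = (∑ i, x i * (r (j.succAbove i) - r j)) / (-(r j)) := by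
      rw [Finset.sum_div]; exact Finset.sum_congr rfl fun i _ => h1 i
    have h3 : ∑ i, x i * (r (j.succAbove i) - r j)
        = (∑ i, x i * r (j.succAbove i)) - (∑ i, x i) * r j := by
      simp [mul_sub, Finset.sum_sub_distrib, Finset.sum_mul]
    rw [h2, div_le_one (by linarith : (0:ℝ) < -(r j)), h3]
    show (1 - ∑ i, x i) * r j + ∑ i, x i * r (j.succAbove i) ≤ 0 ↔ _
    constructor <;> intro h <;> nlinarith [h]
  -- the linear map
  set T : (Fin n → ℝ) →ₗ[ℝ] (Fin n → ℝ) := Matrix.toLin' (Matrix.diagonal d) with hT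
  have hTapp : ∀ x i, T x i = d i * x i := by
    intro x i
    rw [hT, Matrix.toLin'_apply, Matrix.mulVec_diagonal]
  have himg : T '' S = {b ∈ S | L b ≤ 0} := by
    ext x
    constructor
    · rintro ⟨a, ⟨ha0, ha1⟩, rfl⟩
      have hxi : ∀ i, T a i = d i * a i := hTapp a
      have hx0 : ∀ i, 0 ≤ T a i := fun i => by
        rw [hxi i]; exact mul_nonneg (hd i).le (ha0 i)
      have hxd : ∀ i, T a i / d i = a i := fun i => by
        rw [hxi i, mul_div_cancel_left₀ _ (hd i).ne']
      refine ⟨⟨hx0, ?_⟩, ?_⟩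
      · calc ∑ i, T a i ≤ ∑ i, a i := by
              refine Finset.sum_le_sum fun i _ => ?_
              rw [hxi i]
              nlinarith [hd i, hd1 i, ha0 i]
            _ ≤ 1 := ha1
      · rw [key]
        calc ∑ i, T a i / d i = ∑ i, a i := by
              exact Finset.sum_congr rfl fun i _ => hxd i
          _ ≤ 1 := ha1
    · rintro ⟨⟨hx0, hx1⟩, hL⟩
      refine ⟨fun i => x i / d i, ⟨fun i => div_nonneg (hx0 i) (hd i).le,
        (key x).1 hL⟩, ?_⟩
      funext i
      rw [hTapp]
      rw [mul_div_cancel₀ _ (hd i).ne']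
  have hdet : LinearMap.det T = ∏ i, d i := by
    rw [hT, LinearMap.det_toLin', Matrix.det_diagonal]
  rw [← himg, Measure.addHaar_image_linearMap, hdet,
    abs_of_pos (Finset.prod_pos fun i _ => hd i),
    ENNReal.toReal_mul, ENNReal.toReal_ofReal
      (Finset.prod_pos fun i _ => hd i).le]
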